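/- For the LIRK+AMF scheme applied to the test problem h f(y) = iwy, hL = z_1 + z_2, hL̃ = z_1 + z_2 - γz_1z_2, the stability function R(z_1, z_2, iw) = 1 + (iw b + z b̂)ᵀ ((1 + γ²z_1z_2)I - z - iw A)^{-1} 1 with z = z_1 + z_2 satisfies R(z_1, z_2, iw) → 1 as z_1 → -∞ and z_2 → -∞ (for fixed w), i.e., the scheme is only weakly stable for very stiff problems. -/

import Mathlib

open Matrix Filter

/-- Weak stability of the LIRK+AMF scheme: for the test problem `hf(y)=iwy`,
`hL = z₁+z₂`, `hL̃ = z₁+z₂-γz₁z₂`, the stability function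
`R(z₁,z₂,iw) = 1 + (iwb + zb̂)ᵀ((1+γ²z₁z₂)I - zÂ - iwA)⁻¹𝟙` (with `z = z₁+z₂`)
tends to `1` as `z₁ = z₂ → -∞` for fixed `w`. -/
theorem lirk_amf_weak_stability {s : ℕ}
    (A Ahat : Matrix (Fin s) (Fin s) ℝ) (b bhat : Fin s → ℝ) (γ w : ℝ) (hγ : 0 < γ)
    (hA_strict : ∀ i j : Fin s, i ≤ j → A i j = 0)
    (hAhat_lower : ∀ i j : Fin s, i < j → Ahat i j = 0)
    (hAhat_diag : ∀ i : Fin s, Ahat i i = γ)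
    (M : ℝ → ℝ → Matrix (Fin s) (Fin s) ℂ)
    (hM : ∀ z₁ z₂ : ℝ, M z₁ z₂ =
      ((1 + γ ^ 2 * z₁ * z₂ : ℝ) : ℂ) • (1 : Matrix (Fin s) (Fin s) ℂ)
        - ((z₁ + z₂ : ℝ) : ℂ) • Ahat.map Complex.ofReal
        - ((w : ℂ) * Complex.I) • A.map Complex.ofReal)
    (hinv : ∀ z₁ z₂ : ℝ, z₁ < 0 → z₂ < 0 → IsUnit (M z₁ z₂).det)
    (R : ℝ → ℝ → ℂ)
    (hR : ∀ z₁ z₂ : ℝ, R z₁ z₂ =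
      1 + (fun i => (w : ℂ) * Complex.I * (b i : ℂ) + ((z₁ + z₂ : ℝ) : ℂ) * (bhat i : ℂ)) ⬝ᵥ
        ((M z₁ z₂)⁻¹ *ᵥ fun _ => 1)) :
    Tendsto (fun t : ℝ => R t t) atBot (nhds 1) := by
  classical
  have hγc : ((γ : ℂ) ^ 2) ≠ 0 := pow_ne_zero 2 (Complex.ofReal_ne_zero.2 hγ.ne')
  set Ac : Matrix (Fin s) (Fin s) ℂ := A.map Complex.ofReal with hAc
  set Bc : Matrix (Fin s) (Fin s) ℂ := Ahat.map Complex.ofReal with hBc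
  set L : Matrix (Fin s) (Fin s) ℂ := ((γ : ℂ) ^ 2) • 1 with hL
  have hLdet : L.det ≠ 0 := by
    rw [hL, Matrix.det_smul, Matrix.det_one, mul_one]
    exact pow_ne_zero _ hγc
  set N : ℝ → Matrix (Fin s) (Fin s) ℂ := fun t => ((t : ℂ) ^ 2)⁻¹ • M t t with hN
  -- scalar limits
  have hi : Tendsto (fun t : ℝ => ((t : ℂ))⁻¹) atBot (nhds 0) := by
    have h := (tendsto_inv_atTop_zero (𝕜 := ℝ)).comp tendsto_neg_atBot_atTop
    have h2 : Tendsto (fun t : ℝ => -(-t)⁻¹) atBot (nhds (-0)) := h.neg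
    rw [neg_zero] at h2
    have h3 : Tendsto (fun t : ℝ => t⁻¹) atBot (nhds 0) :=
      h2.congr fun t => by simp [inv_neg]
    have := (Complex.continuous_ofReal.tendsto 0).comp h3
    refine this.congr' ?_ |>.mono_left le_rfl
    · filter_upwards with t; simp
  have hsq : Tendsto (fun t : ℝ => ((t : ℂ) ^ 2)⁻¹) atBot (nhds 0) := by
    have : Tendsto (fun t : ℝ => ((t : ℂ))⁻¹ ^ 2) atBot (nhds 0) := by
      simpa using hi.pow 2
    exact this.congr fun t => by rw [inv_pow]
  -- limit of N
  have hNtend : Tendsto N atBot (nhds L) := by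
    have hc1 : Tendsto (fun t : ℝ => ((t : ℂ) ^ 2)⁻¹ * ((1 + γ ^ 2 * t * t : ℝ) : ℂ))
        atBot (nhds ((γ : ℂ) ^ 2)) := by
      have key : ∀ᶠ t : ℝ in atBot,
          ((t : ℂ) ^ 2)⁻¹ * ((1 + γ ^ 2 * t * t : ℝ) : ℂ) = ((t : ℂ) ^ 2)⁻¹ + (γ : ℂ) ^ 2 := by
        filter_upwards [eventually_lt_atBot (0 : ℝ)] with t ht
        have htc : ((t : ℂ) ^ 2) ≠ 0 := pow_ne_zero 2 (Complex.ofReal_ne_zero.2 ht.ne)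
        push_cast
        field_simp
        rw [add_div, mul_div_cancel_left₀ _ htc]
      have : Tendsto (fun t : ℝ => ((t : ℂ) ^ 2)⁻¹ + (γ : ℂ) ^ 2) atBot
          (nhds (0 + (γ : ℂ) ^ 2)) := hsq.add tendsto_const_nhds
      rw [zero_add] at this
      exact Tendsto.congr' (key.mono fun _ h => h.symm) this
    have hc2 : Tendsto (fun t : ℝ => ((t : ℂ) ^ 2)⁻¹ * ((t + t : ℝ) : ℂ)) atBot (nhds 0) := by
      have key : ∀ᶠ t : ℝ in atBot,
          ((t : ℂ) ^ 2)⁻¹ * ((t + t : ℝ) : ℂ) = 2 * ((t : ℂ))⁻¹ := by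
        filter_upwards [eventually_lt_atBot (0 : ℝ)] with t ht
        have htc : ((t : ℂ)) ≠ 0 := Complex.ofReal_ne_zero.2 ht.ne
        push_cast
        field_simp
        ring
      have : Tendsto (fun t : ℝ => 2 * ((t : ℂ))⁻¹) atBot (nhds (2 * 0)) :=
        tendsto_const_nhds.mul hi
      rw [mul_zero] at this
      exact Tendsto.congr' (key.mono fun _ h => h.symm) this
    have hc3 : Tendsto (fun t : ℝ => ((t : ℂ) ^ 2)⁻¹ * ((w : ℂ) * Complex.I)) atBot (nhds 0) := by
      have := hsq.mul_const ((w : ℂ) * Complex.I)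
      rwa [zero_mul] at this
    have hsum : Tendsto (fun t : ℝ =>
        (((t : ℂ) ^ 2)⁻¹ * ((1 + γ ^ 2 * t * t : ℝ) : ℂ)) • (1 : Matrix (Fin s) (Fin s) ℂ)
        - (((t : ℂ) ^ 2)⁻¹ * ((t + t : ℝ) : ℂ)) • Bc
        - (((t : ℂ) ^ 2)⁻¹ * ((w : ℂ) * Complex.I)) • Ac) atBot
        (nhds (((γ : ℂ) ^ 2) • 1 - (0 : ℂ) • Bc - (0 : ℂ) • Ac)) :=
      ((hc1.smul_const _).sub (hc2.smul_const _)).sub (hc3.smul_const _)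
    rw [zero_smul, zero_smul, sub_zero, sub_zero] at hsum
    refine hsum.congr fun t => ?_
    rw [hN]
    simp only [hM t t]
    rw [smul_sub, smul_sub, smul_smul, smul_smul, smul_smul]
  -- limit of N⁻¹
  have hNinv : Tendsto (fun t => (N t)⁻¹) atBot (nhds L⁻¹) := by
    have hcont : ContinuousAt Ring.inverse L.det := by
      have : (Ring.inverse : ℂ → ℂ) = Inv.inv := funext fun x => Ring.inverse_eq_inv x
      rw [this]
      exact continuousAt_inv₀ hLdet
    exact (continuousAt_matrix_inv L hcont).tendsto.comp hNtend
  -- limit of entries of N⁻¹ *ᵥ 1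
  have hentry : ∀ i : Fin s, Tendsto (fun t => ((N t)⁻¹ *ᵥ fun _ => (1 : ℂ)) i) atBot
      (nhds ((L⁻¹ *ᵥ fun _ => (1 : ℂ)) i)) := by
    intro i
    have : ∀ (X : Matrix (Fin s) (Fin s) ℂ), (X *ᵥ fun _ => (1 : ℂ)) i = ∑ j, X i j := by
      intro X; simp [Matrix.mulVec, dotProduct]
    simp only [this]
    refine tendsto_finset_sum _ fun j _ => ?_
    exact (((continuous_apply j).comp (continuous_apply i)).tendsto L⁻¹).comp hNinv
  -- the error term g
  set g : ℝ → ℂ := fun t => ∑ i, (((t : ℂ) ^ 2)⁻¹ *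
      ((w : ℂ) * Complex.I * (b i : ℂ) + ((t + t : ℝ) : ℂ) * (bhat i : ℂ))) *
      ((N t)⁻¹ *ᵥ fun _ => (1 : ℂ)) i with hg
  have hgtend : Tendsto g atBot (nhds 0) := by
    have : Tendsto (fun t : ℝ => ∑ i : Fin s, (((t : ℂ) ^ 2)⁻¹ *
        ((w : ℂ) * Complex.I * (b i : ℂ) + ((t + t : ℝ) : ℂ) * (bhat i : ℂ))) *
        ((N t)⁻¹ *ᵥ fun _ => (1 : ℂ)) i) atBot
        (nhds (∑ i : Fin s, (0 : ℂ) * ((L⁻¹ *ᵥ fun _ => (1 : ℂ)) i))) := by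
      refine tendsto_finset_sum _ fun i _ => Tendsto.mul ?_ (hentry i)
      -- coefficient → 0
      have key : ∀ᶠ t : ℝ in atBot,
          ((t : ℂ) ^ 2)⁻¹ * ((w : ℂ) * Complex.I * (b i : ℂ) + ((t + t : ℝ) : ℂ) * (bhat i : ℂ))
          = ((t : ℂ) ^ 2)⁻¹ * ((w : ℂ) * Complex.I * (b i : ℂ)) + ((t:ℂ))⁻¹ * (2 * (bhat i : ℂ)) := by
        filter_upwards [eventually_lt_atBot (0 : ℝ)] with t ht
        have htc : ((t : ℂ)) ≠ 0 := Complex.ofReal_ne_zero.2 ht.ne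
        push_cast
        field_simp
        ring
      have h1 := hsq.mul_const ((w : ℂ) * Complex.I * (b i : ℂ))
      have h2 := hi.mul_const (2 * (bhat i : ℂ))
      rw [zero_mul] at h1 h2
      have := h1.add h2
      rw [add_zero] at this
      exact Tendsto.congr' (key.mono fun _ h => h.symm) this
    rw [show (0 : ℂ) = ∑ i : Fin s, (0 : ℂ) * ((L⁻¹ *ᵥ fun _ => (1 : ℂ)) i) by simp]
    exact this
  -- eventual identity R t t = 1 + g t
  have hevent : ∀ᶠ t : ℝ in atBot, R t t = 1 + g t := by
    filter_upwards [eventually_lt_atBot (0 : ℝ)] with t ht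
    have htc : ((t : ℂ) ^ 2) ≠ 0 := pow_ne_zero 2 (Complex.ofReal_ne_zero.2 ht.ne)
    have hMN : M t t = ((t : ℂ) ^ 2) • N t := by
      rw [hN, smul_smul, mul_inv_cancel₀ htc, one_smul]
    have hNdet : IsUnit (N t).det := by
      rw [hN, Matrix.det_smul]
      exact (IsUnit.pow _ (isUnit_iff_ne_zero.2 (inv_ne_zero htc))).mul (hinv t t ht ht)
    have hMinv : (M t t)⁻¹ = ((t : ℂ) ^ 2)⁻¹ • (N t)⁻¹ := by
      rw [hMN]
      have := Matrix.inv_smul' (A := N t) (Units.mk0 _ htc) hNdet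
      simpa [Units.smul_def] using this
    rw [hR t t, hMinv, Matrix.smul_mulVec, hg]
    congr 1
    rw [dotProduct]
    refine Finset.sum_congr rfl fun i _ => ?_
    simp only [Pi.smul_apply, smul_eq_mul]
    ring
  have final : Tendsto (fun t : ℝ => 1 + g t) atBot (nhds (1 + 0)) :=
    tendsto_const_nhds.add hgtend
  rw [add_zero] at final
  exact Tendsto.congr' (hevent.mono fun t h => h.symm) final
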